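/- Let (g = U ⊕ V, B) be a Manin algebra over a field K of characteristic 0. Then there exists a symplectic structure ω on g with ω(U,U) = ω(V,V) = {0} (i.e. (g = U ⊕ V, B) is a special symplectic Manin algebra) if and only if there exists an invertible derivation D of g, skew-symmetric with respect to B, such that D(U) ⊆ U and D(V) ⊆ V. -/

import Mathlib

/-- A Manin algebra `(g = U ⊕ V, B)` is special symplectic (it has a symplectic structure `ω`
with `ω(U,U) = ω(V,V) = 0`) if and only if there is an invertible derivation `D` of `g`,
skew-symmetric with respect to `B`, with `D(U) ⊆ U` and `D(V) ⊆ V`. -/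
theorem stmt_16 (K : Type*) [Field K] [CharZero K]
    (g : Type*) [LieRing g] [LieAlgebra K g] [Module.Finite K g]
    (B : LinearMap.BilinForm K g)
    (hBnd : B.Nondegenerate)
    (hBsymm : ∀ x y : g, B x y = B y x)
    (hBinv : ∀ x y z : g, B ⁅x, y⁆ z = B x ⁅y, z⁆)
    (U V : LieSubalgebra K g)
    (hUV : IsCompl U.toSubmodule V.toSubmodule)
    (hUiso : ∀ x ∈ U, ∀ y ∈ U, B x y = 0)
    (hViso : ∀ x ∈ V, ∀ y ∈ V, B x y = 0) :
    (∃ ω : LinearMap.BilinForm K g, ω.Nondegenerate ∧ (∀ x : g, ω x x = 0) ∧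
      (∀ x y z : g, ω ⁅x, y⁆ z + ω ⁅y, z⁆ x + ω ⁅z, x⁆ y = 0) ∧
      (∀ x ∈ U, ∀ y ∈ U, ω x y = 0) ∧ (∀ x ∈ V, ∀ y ∈ V, ω x y = 0)) ↔
    (∃ D : g →ₗ[K] g, Function.Bijective D ∧
      (∀ x y : g, D ⁅x, y⁆ = ⁅D x, y⁆ + ⁅x, D y⁆) ∧
      (∀ x y : g, B (D x) y = - B x (D y)) ∧
      (∀ x ∈ U, D x ∈ U) ∧ (∀ x ∈ V, D x ∈ V)) := by
  haveI : FiniteDimensional K g := ‹Module.Finite K g›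
  -- generic facts about negation in each slot of B
  have hBneg1 : ∀ a b : g, B (-a) b = - B a b := by intro a b; simp
  have hBneg2 : ∀ a b : g, B a (-b) = - B a b := by intro a b; simp
  constructor
  · rintro ⟨ω, hωnd, hωalt, hωcocycle, hωU, hωV⟩
    -- skew-symmetry of ω
    have hωskew : ∀ x y : g, ω x y = - ω y x := by
      intro x y
      have h := hωalt (x + y)
      have hx := hωalt x
      have hy := hωalt y
      simp only [map_add, LinearMap.add_apply] at h
      linear_combination h - hx - hy
    -- define D via the duality induced by B
    set D : g →ₗ[K] g := ((B.toDual hBnd).symm : Module.Dual K g →ₗ[K] g) ∘ₗ ω with hD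
    have hBD : ∀ x y : g, B (D x) y = ω x y := by
      intro x y
      simp [hD, LinearMap.BilinForm.apply_toDual_symm_apply]
    have hDinj : Function.Injective D := by
      intro x y hxy
      have h0 : D (x - y) = 0 := by rw [map_sub, hxy, sub_self]
      have hω0 : ∀ z : g, ω (x - y) z = 0 := by
        intro z
        rw [← hBD]
        rw [h0]
        simp
      have := hωnd.1 _ hω0
      exact sub_eq_zero.mp this
    refine ⟨D, ?_, ?_, ?_, ?_, ?_⟩
    · exact ⟨hDinj, LinearMap.surjective_of_injective hDinj⟩
    · -- derivation property
      intro x y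
      have key : ∀ z : g, B (D ⁅x, y⁆ - (⁅D x, y⁆ + ⁅x, D y⁆)) z = 0 := by
        intro z
        have h1 : B (D ⁅x, y⁆) z = ω ⁅x, y⁆ z := hBD _ _
        have h2 : ω ⁅x, y⁆ z + ω ⁅y, z⁆ x + ω ⁅z, x⁆ y = 0 := hωcocycle x y z
        have h3 : ω ⁅y, z⁆ x = - ω x ⁅y, z⁆ := by rw [hωskew]
        have h4 : ω ⁅z, x⁆ y = - ω y ⁅z, x⁆ := by rw [hωskew]
        have h5 : ω x ⁅y, z⁆ = B (D x) ⁅y, z⁆ := (hBD _ _).symm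
        have h6 : ω y ⁅z, x⁆ = B (D y) ⁅z, x⁆ := (hBD _ _).symm
        have h7 : B ⁅D x, y⁆ z = B (D x) ⁅y, z⁆ := hBinv _ _ _
        have h8 : B ⁅x, D y⁆ z = B (D y) ⁅z, x⁆ := by
          have e1 : (⁅x, D y⁆ : g) = -⁅D y, x⁆ := (lie_skew _ _).symm
          have e2 : (⁅z, x⁆ : g) = -⁅x, z⁆ := (lie_skew _ _).symm
          rw [e1, hBneg1, hBinv, e2, hBneg2]
        have hsub : B (D ⁅x, y⁆ - (⁅D x, y⁆ + ⁅x, D y⁆)) z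
            = B (D ⁅x, y⁆) z - (B ⁅D x, y⁆ z + B ⁅x, D y⁆ z) := by
          simp [map_sub, map_add]
        rw [hsub]
        linear_combination h1 + h2 - h3 - h4 + h5 + h6 - h7 - h8
      have h0 := hBnd.1 _ key
      have := sub_eq_zero.mp h0
      exact this
    · -- skew-symmetry w.r.t. B
      intro x y
      rw [hBD, hωskew x y, ← hBD y x, hBsymm]
    · -- D(U) ⊆ U
      intro x hx
      obtain ⟨u, v, hu, hv, huv⟩ := Submodule.codisjoint_iff_exists_add_eq.mp hUV.codisjoint (D x)
      have hv0 : v = 0 := by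
        apply hBnd.1
        intro z
        obtain ⟨u', v', hu', hv', huv'⟩ :=
          Submodule.codisjoint_iff_exists_add_eq.mp hUV.codisjoint z
        have hbvu : B v u' = 0 := by
          have hDxu : B (D x) u' = 0 := by rw [hBD]; exact hωU x hx u' hu'
          have hBuu : B u u' = 0 := hUiso u hu u' hu'
          have : B (u + v) u' = 0 := by rw [huv, hDxu]
          simp only [map_add, LinearMap.add_apply] at this
          linear_combination this - hBuu
        have hbvv : B v v' = 0 := hViso v hv v' hv'
        rw [← huv']
        simp [hbvu, hbvv]
      have : D x = u := by rw [← huv, hv0, add_zero]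
      rw [this]; exact hu
    · -- D(V) ⊆ V
      intro x hx
      obtain ⟨u, v, hu, hv, huv⟩ := Submodule.codisjoint_iff_exists_add_eq.mp hUV.codisjoint (D x)
      have hu0 : u = 0 := by
        apply hBnd.1
        intro z
        obtain ⟨u', v', hu', hv', huv'⟩ :=
          Submodule.codisjoint_iff_exists_add_eq.mp hUV.codisjoint z
        have hbuv : B u v' = 0 := by
          have hDxv : B (D x) v' = 0 := by rw [hBD]; exact hωV x hx v' hv'
          have hBvv : B v v' = 0 := hViso v hv v' hv'
          have : B (u + v) v' = 0 := by rw [huv, hDxv]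
          simp only [map_add, LinearMap.add_apply] at this
          linear_combination this - hBvv
        have hbuu : B u u' = 0 := hUiso u hu u' hu'
        rw [← huv']
        simp [hbuu, hbuv]
      have : D x = v := by rw [← huv, hu0, zero_add]
      rw [this]; exact hv
  · rintro ⟨D, hDbij, hDder, hDskew, hDU, hDV⟩
    refine ⟨B ∘ₗ D, ?_, ?_, ?_, ?_, ?_⟩
    · refine ⟨fun x hx => ?_, ?_⟩
      have hDx0 : ∀ y : g, B (D x) y = 0 := fun y => hx y
      have := hBnd.1 _ hDx0
      exact hDbij.injective (by rw [this, map_zero])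
      intro y hy
      have hDy0 : ∀ x : g, B (D y) x = 0 := fun x => by
        rw [hBsymm, ← neg_neg (B x (D y)), ← hDskew]; simpa using hy x
      have := hBnd.1 _ hDy0
      exact hDbij.injective (by rw [this, map_zero])
    · intro x
      have h1 : B (D x) x = - B x (D x) := hDskew x x
      have h2 : B x (D x) = B (D x) x := hBsymm _ _
      have h3 : B (D x) x + B (D x) x = 0 := by linear_combination h1 - h2
      have h4 : (2 : K) * B (D x) x = 0 := by linear_combination h3
      have := mul_eq_zero.mp h4
      rcases this with h | h
      · exact absurd h two_ne_zero
      · simpa using h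
    · intro x y z
      -- helper: cyclic sum of B (D x) ⁅y,z⁆ vanishes
      have helper : ∀ a b c : g,
          B (D a) ⁅b, c⁆ + B (D b) ⁅c, a⁆ + B (D c) ⁅a, b⁆ = 0 := by
        intro a b c
        have h1 : B (D a) ⁅b, c⁆ = - B a (D ⁅b, c⁆) := hDskew _ _
        have h2 : D ⁅b, c⁆ = ⁅D b, c⁆ + ⁅b, D c⁆ := hDder _ _
        have h3 : B a ⁅D b, c⁆ = B (D b) ⁅c, a⁆ := by
          have e1 : B ⁅a, D b⁆ c = B a ⁅D b, c⁆ := hBinv _ _ _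
          have e2 : (⁅a, D b⁆ : g) = -⁅D b, a⁆ := (lie_skew _ _).symm
          have e3 : B ⁅D b, a⁆ c = B (D b) ⁅a, c⁆ := hBinv _ _ _
          have e4 : (⁅c, a⁆ : g) = -⁅a, c⁆ := (lie_skew _ _).symm
          rw [← e1, e2, hBneg1, e3, e4, hBneg2]
        have h4 : B a ⁅b, D c⁆ = B (D c) ⁅a, b⁆ := by
          have e1 : (⁅b, D c⁆ : g) = -⁅D c, b⁆ := (lie_skew _ _).symm
          have e2 : B ⁅a, D c⁆ b = B a ⁅D c, b⁆ := hBinv _ _ _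
          have e3 : (⁅a, D c⁆ : g) = -⁅D c, a⁆ := (lie_skew _ _).symm
          have e4 : B ⁅D c, a⁆ b = B (D c) ⁅a, b⁆ := hBinv _ _ _
          rw [e1, hBneg2, ← e2, e3, hBneg1, e4, neg_neg]
        have h5 : B a (⁅D b, c⁆ + ⁅b, D c⁆) = B a ⁅D b, c⁆ + B a ⁅b, D c⁆ := by
          simp [map_add]
        rw [h1, h2, h5, h3, h4]
        ring
      have expand : ∀ a b c : g,
          B (D ⁅a, b⁆) c = B (D a) ⁅b, c⁆ + B (D b) ⁅c, a⁆ := by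
        intro a b c
        have h2 : D ⁅a, b⁆ = ⁅D a, b⁆ + ⁅a, D b⁆ := hDder _ _
        have h7 : B ⁅D a, b⁆ c = B (D a) ⁅b, c⁆ := hBinv _ _ _
        have h8 : B ⁅a, D b⁆ c = B (D b) ⁅c, a⁆ := by
          have e1 : (⁅a, D b⁆ : g) = -⁅D b, a⁆ := (lie_skew _ _).symm
          have e2 : (⁅c, a⁆ : g) = -⁅a, c⁆ := (lie_skew _ _).symm
          rw [e1, hBneg1, hBinv, e2, hBneg2]
        rw [h2]
        have : B (⁅D a, b⁆ + ⁅a, D b⁆) c = B ⁅D a, b⁆ c + B ⁅a, D b⁆ c := by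
          simp [map_add]
        rw [this, h7, h8]
      show B (D ⁅x, y⁆) z + B (D ⁅y, z⁆) x + B (D ⁅z, x⁆) y = 0
      rw [expand x y z, expand y z x, expand z x y]
      have h1 := helper x y z
      linear_combination 2 * h1
    · intro x hx y hy
      exact hUiso (D x) (hDU x hx) y hy
    · intro x hx y hy
      exact hViso (D x) (hDV x hx) y hy
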